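/- If G is a connected bipartite cactus in which every edge belongs to a cycle, then γ₂(G) ≤ a(G) + 1. -/

import Mathlib

open Classical Finset
noncomputable section

/-- `S` is a 2-dominating set of `G`: every vertex outside `S` has ≥ 2 neighbors in `S`. -/
def IsTwoDomSet {V : Type*} [Fintype V] (G : SimpleGraph V) (S : Finset V) : Prop :=
  ∀ v, v ∉ S → 2 ≤ (G.neighborFinset v ∩ S).card

/-- The 2-domination number. -/
noncomputable def gamma2 {V : Type*} [Fintype V] (G : SimpleGraph V) : ℕ :=
  sInf {k | ∃ S : Finset V, IsTwoDomSet G S ∧ S.card = k}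

/-- `S` is an annihilation set of `G`: the sum of degrees over `S` is at most `m(G)`. -/
def IsAnnSet {V : Type*} [Fintype V] (G : SimpleGraph V) (S : Finset V) : Prop :=
  ∑ v ∈ S, G.degree v ≤ G.edgeFinset.card

/-- The annihilation number: the largest size of an annihilation set (equivalently, the
largest `k` such that the sum of the `k` smallest degrees is at most the edge count). -/
noncomputable def annihilation {V : Type*} [Fintype V] (G : SimpleGraph V) : ℕ :=
  sSup {k | ∃ S : Finset V, IsAnnSet G S ∧ S.card = k}

/-- A cactus: a connected graph whose cycles are pairwise edge-disjoint
(two cycles either have the same edge set or share no edge). -/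
def IsCactus {V : Type*} (G : SimpleGraph V) : Prop :=
  G.Connected ∧ ∀ (u v : V) (p : G.Walk u u) (q : G.Walk v v),
    p.IsCycle → q.IsCycle →
      (p.edges.toFinset = q.edges.toFinset ∨ ∀ e ∈ p.edges, e ∉ q.edges)

/-- The distance between two cycles (given as closed walks): the minimum distance
between a vertex of one and a vertex of the other. -/
noncomputable def cycDist {V : Type*} (G : SimpleGraph V) {u v : V}
    (c : G.Walk u u) (d : G.Walk v v) : ℕ :=
  sInf {n | ∃ y ∈ c.support, ∃ z ∈ d.support, G.dist y z = n}

/-- `x` is an exit vertex of the cycle `c`: it realizes the distance from `c`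
to some other cycle of `G`. -/
def IsExit {V : Type*} (G : SimpleGraph V) {u : V} (c : G.Walk u u) (x : V) : Prop :=
  x ∈ c.support ∧ ∃ (w : V) (d : G.Walk w w), d.IsCycle ∧
    d.edges.toFinset ≠ c.edges.toFinset ∧ ∃ z ∈ d.support, G.dist x z = cycDist G c d

/-- An outer cycle: a cycle with at most one exit vertex. -/
def IsOuterCycle {V : Type*} (G : SimpleGraph V) {u : V} (c : G.Walk u u) : Prop :=
  c.IsCycle ∧ ∀ x y, IsExit G c x → IsExit G c y → x = y

/-- There is a sun at the cycle `c`: at every vertex of `c` except one (the exit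
vertex, if there is one) there is exactly one pendant vertex attached and no other
tree, i.e. the vertex has degree 3 and a unique leaf neighbor. -/
def HasSunAt {V : Type*} [Fintype V] (G : SimpleGraph V) {u : V} (c : G.Walk u u) : Prop :=
  ∃ x ∈ c.support, (∀ y, IsExit G c y → y = x) ∧
    ∀ v ∈ c.support, v ≠ x →
      G.degree v = 3 ∧ ∃! w, G.Adj v w ∧ G.degree w = 1

lemma gamma2_le_card {V : Type*} [Fintype V] (G : SimpleGraph V) (S : Finset V)
    (hS : IsTwoDomSet G S) : gamma2 G ≤ S.card :=
  Nat.sInf_le ⟨S, hS, rfl⟩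

lemma card_le_annihilation {V : Type*} [Fintype V] (G : SimpleGraph V) (S : Finset V)
    (hS : IsAnnSet G S) : S.card ≤ annihilation G := by
  apply le_csSup
  · exact ⟨Fintype.card V, by rintro k ⟨T, _, rfl⟩; exact T.card_le_univ⟩
  · exact ⟨S, hS, rfl⟩

/-- Every vertex with a neighbor has degree ≥ 2, if every edge lies on a cycle. -/
lemma two_le_degree_of_edge_cycle {V : Type*} [Fintype V] (G : SimpleGraph V)
    (hedge : ∀ e ∈ G.edgeSet, ∃ (u : V) (c : G.Walk u u), c.IsCycle ∧ e ∈ c.edges)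
    {v w : V} (hvw : G.Adj v w) : 2 ≤ G.degree v := by
  obtain ⟨u, c, hc, he⟩ := hedge s(v, w) hvw
  have hreach : (G \ SimpleGraph.fromEdgeSet {s(v, w)}).Reachable v w :=
    (SimpleGraph.adj_and_reachable_delete_edges_iff_exists_cycle.mpr ⟨u, c, hc, he⟩).2
  obtain ⟨p⟩ := hreach
  have hpnil : ¬ p.Nil := by
    intro h
    exact hvw.ne (SimpleGraph.Walk.Nil.eq h)
  obtain ⟨x, h, q, rfl⟩ := SimpleGraph.Walk.not_nil_iff.mp hpnil
  have hadjx : G.Adj v x ∧ ¬ (SimpleGraph.fromEdgeSet {s(v, w)}).Adj v x := h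
  have hxw : x ≠ w := by
    rintro rfl
    exact hadjx.2 ⟨by simp, hvw.ne⟩
  have hsub : ({w, x} : Finset V) ⊆ G.neighborFinset v := by
    intro y hy
    simp only [Finset.mem_insert, Finset.mem_singleton] at hy
    rcases hy with rfl | rfl
    · exact (SimpleGraph.mem_neighborFinset _ _ _).mpr hvw
    · exact (SimpleGraph.mem_neighborFinset _ _ _).mpr hadjx.1
  calc 2 = ({w, x} : Finset V).card := (Finset.card_pair (Ne.symm hxw)).symm
    _ ≤ (G.neighborFinset v).card := Finset.card_le_card hsub
    _ = G.degree v := (G.card_neighborFinset_eq_degree v).symm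

/-- Proposition 1.2 (Jakovac): a connected bipartite cactus in which every edge lies on a
cycle satisfies `γ₂(G) ≤ a(G) + 1`. -/
theorem stmt17 {V : Type*} [Fintype V] (G : SimpleGraph V)
    (hcac : IsCactus G) (hbip : G.Colorable 2)
    (hedge : ∀ e ∈ G.edgeSet, ∃ (u : V) (c : G.Walk u u), c.IsCycle ∧ e ∈ c.edges) :
    gamma2 G ≤ annihilation G + 1 := by
  by_cases hcard : Fintype.card V ≤ 1
  · -- trivial case: at most one vertex
    have h1 : gamma2 G ≤ 1 := by
      calc gamma2 G ≤ (Finset.univ : Finset V).card :=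
            gamma2_le_card G _ (fun v hv => absurd (Finset.mem_univ v) hv)
        _ = Fintype.card V := Finset.card_univ
        _ ≤ 1 := hcard
    omega
  push_neg at hcard
  -- every vertex has a neighbor
  have hnb : ∀ v : V, ∃ w, G.Adj v w := by
    intro v
    obtain ⟨w, hw⟩ := Fintype.exists_ne_of_one_lt_card hcard v
    obtain ⟨p⟩ := hcac.1.preconnected v w
    have hpnil : ¬ p.Nil := by
      intro h
      exact hw (SimpleGraph.Walk.Nil.eq h).symm
    obtain ⟨x, h, q, rfl⟩ := SimpleGraph.Walk.not_nil_iff.mp hpnil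
    exact ⟨x, h⟩
  have hdeg : ∀ v : V, 2 ≤ G.degree v := by
    intro v
    obtain ⟨w, hw⟩ := hnb v
    exact two_le_degree_of_edge_cycle G hedge hw
  -- the coloring
  obtain ⟨C⟩ := hbip
  set A : Finset V := Finset.univ.filter (fun v => C v = 0) with hA
  -- A is a 2-dominating set
  have hdom : IsTwoDomSet G A := by
    intro v hv
    have hCv : C v ≠ 0 := by simpa [hA] using hv
    have hsub : G.neighborFinset v ⊆ A := by
      intro w hw
      rw [SimpleGraph.mem_neighborFinset] at hw
      have hne := C.valid hw
      simp only [hA, Finset.mem_filter, Finset.mem_univ, true_and]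
      omega
    calc 2 ≤ G.degree v := hdeg v
      _ = (G.neighborFinset v).card := (G.card_neighborFinset_eq_degree v)
      _ = (G.neighborFinset v ∩ A).card := by
          rw [Finset.inter_eq_left.mpr hsub]
  -- A is an annihilation set: sum of its degrees equals the edge count
  have hann : IsAnnSet G A := by
    unfold IsAnnSet
    have hdegi : ∀ v ∈ A, G.degree v = (G.incidenceFinset v).card := by
      intro v _
      exact (G.card_incidenceFinset_eq_degree v).symm
    rw [Finset.sum_congr rfl hdegi, ← Finset.card_biUnion]
    · apply Finset.card_le_card
      intro e he
      simp only [Finset.mem_biUnion] at he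
      obtain ⟨v, _, hev⟩ := he
      rw [SimpleGraph.mem_incidenceFinset] at hev
      rw [SimpleGraph.mem_edgeFinset]
      exact hev.1
    · intro x hx y hy hxy
      simp only [hA, Finset.mem_coe, Finset.mem_filter, Finset.mem_univ, true_and] at hx hy
      simp only [Finset.disjoint_left]
      intro e hex hey
      rw [SimpleGraph.mem_incidenceFinset] at hex hey
      have hmem : x ∈ e ∧ y ∈ e := ⟨hex.2, hey.2⟩
      have : e = s(x, y) := (Sym2.mem_and_mem_iff hxy).mp hmem
      subst this
      have hadj : G.Adj x y := hex.1
      have := C.valid hadj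
      rw [hx, hy] at this
      exact this rfl
  calc gamma2 G ≤ A.card := gamma2_le_card G A hdom
    _ ≤ annihilation G := card_le_annihilation G A hann
    _ ≤ annihilation G + 1 := Nat.le_succ _
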